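/- Let n ≥ 1, let B ∈ ℝ^{n×n} be a symmetric positive-definite matrix, μ ∈ ℝⁿ, and let 1 < q < 1 + 2/n. Then the integral over ℝⁿ of [1 + (q-1)·(x-μ)ᵀB(x-μ)]^{-1/(q-1)} converges and equals (q-1)^{-n/2}·(det B)^{-1/2}·π^{n/2}·Γ(1/(q-1) - n/2)/Γ(1/(q-1)). -/

import Mathlib

open MeasureTheory Matrix
open scoped MatrixOrder

namespace QGaussianAux

open Set Real

lemma beta_Ioo {a b : ℝ} (ha : 0 < a) (hb : 0 < b) :
    ∫ x in Ioo (0:ℝ) 1, x ^ (a-1) * (1-x) ^ (b-1) =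
      Real.Gamma a * Real.Gamma b / Real.Gamma (a+b) := by
  have h := Complex.Gamma_mul_Gamma_eq_betaIntegral (s := (a:ℂ)) (t := (b:ℂ))
    (by simpa using ha) (by simpa using hb)
  have hbeta : Complex.betaIntegral (a:ℂ) (b:ℂ) =
      ((∫ x in Ioo (0:ℝ) 1, x ^ (a-1) * (1-x) ^ (b-1) : ℝ) : ℂ) := by
    rw [Complex.betaIntegral, intervalIntegral.integral_of_le zero_le_one,
      integral_Ioc_eq_integral_Ioo]
    refine Eq.trans (setIntegral_congr_fun measurableSet_Ioo fun x hx => ?_)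
      (integral_ofReal (f := fun x : ℝ => x ^ (a-1) * (1-x) ^ (b-1)))
    show _ = ((_ : ℝ) : ℂ)
    simp only [Algebra.algebraMap_self, RingHom.id_apply]
    rw [Complex.ofReal_mul, Complex.ofReal_cpow hx.1.le,
      Complex.ofReal_cpow (by linarith [hx.2] : (0:ℝ) ≤ 1 - x)]
    push_cast
    ring
  rw [hbeta, ← Complex.ofReal_add, Complex.Gamma_ofReal, Complex.Gamma_ofReal,
    Complex.Gamma_ofReal, ← Complex.ofReal_mul, ← Complex.ofReal_mul] at h
  have h2 := Complex.ofReal_injective h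
  have hG : Real.Gamma (a+b) ≠ 0 := (Real.Gamma_pos_of_pos (by linarith)).ne'
  field_simp
  linarith [h2]

lemma beta_Ioi {a b : ℝ} (ha : 0 < a) (hb : 0 < b)
    (hIoo : ∫ x in Ioo (0:ℝ) 1, x ^ (a-1) * (1-x) ^ (b-1) =
      Real.Gamma a * Real.Gamma b / Real.Gamma (a+b)) :
    ∫ s in Ioi (0:ℝ), s ^ (a-1) * (1+s) ^ (-(a+b)) =
      Real.Gamma a * Real.Gamma b / Real.Gamma (a+b) := by
  have himg : (fun u : ℝ => u / (1-u)) '' Ioo 0 1 = Ioi 0 := by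
    ext y
    constructor
    · rintro ⟨u, ⟨h0, h1⟩, rfl⟩
      exact div_pos h0 (by linarith)
    · intro hy
      have hy' : (0:ℝ) < y := hy
      refine ⟨y / (1+y), ⟨div_pos hy' (by linarith), (div_lt_one (by linarith)).2 (by linarith)⟩, ?_⟩
      field_simp
      ring
  have hderiv : ∀ u ∈ Ioo (0:ℝ) 1, HasDerivWithinAt (fun u : ℝ => u / (1-u))
      (((1-u)^2)⁻¹) (Ioo (0:ℝ) 1) u := by
    intro u hu
    have h1 : (1:ℝ) - u ≠ 0 := by have := hu.2; intro h; linarith [sub_eq_zero.mp h]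
    have := (hasDerivAt_id u).div ((hasDerivAt_const u (1:ℝ)).sub (hasDerivAt_id u)) h1
    convert this.hasDerivWithinAt using 1
    · rfl
    · rfl
    · rfl
    · simp
  have hinj : InjOn (fun u : ℝ => u / (1-u)) (Ioo 0 1) := by
    intro u hu v hv h
    have h1 : (1:ℝ) - u ≠ 0 := by have := hu.2; intro h; linarith [sub_eq_zero.mp h]
    have h2 : (1:ℝ) - v ≠ 0 := by have := hv.2; intro h; linarith [sub_eq_zero.mp h]
    field_simp at h
    nlinarith [h]
  rw [← himg, integral_image_eq_integral_abs_deriv_smul measurableSet_Ioo hderiv hinj, ← hIoo]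
  refine setIntegral_congr_fun measurableSet_Ioo fun u hu => ?_
  obtain ⟨h0, h1⟩ := hu
  have h1u : (0:ℝ) < 1 - u := by linarith
  have key : 1 + u / (1-u) = (1-u)⁻¹ := by field_simp; ring
  rw [smul_eq_mul, key, Real.div_rpow h0.le h1u.le, Real.inv_rpow h1u.le,
    Real.rpow_neg h1u.le, inv_inv, abs_of_pos (by positivity)]
  have e1 : (((1:ℝ)-u)^(2:ℕ))⁻¹ = (1-u)^(-2:ℝ) := by
    rw [← Real.rpow_natCast (1-u) 2, ← Real.rpow_neg h1u.le]; norm_num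
  have e2 : u^(a-1)/(1-u)^(a-1) = u^(a-1) * (1-u)^(-(a-1)) := by
    rw [Real.rpow_neg h1u.le, div_eq_mul_inv]
  have e3 : ((1:ℝ)-u)^(b-1) = (1-u)^(-2:ℝ) * (1-u)^(-(a-1)) * (1-u)^(a+b) := by
    rw [← Real.rpow_add h1u, ← Real.rpow_add h1u]; ring_nf
  rw [e1, e2, e3]
  ring

lemma radial (n : ℕ) (hn : 1 ≤ n) {P : ℝ} (hP : (n:ℝ)/2 < P)
    (hbeta : ∫ s in Ioi (0:ℝ), s ^ ((n:ℝ)/2-1) * (1+s) ^ (-((n:ℝ)/2+(P-(n:ℝ)/2))) =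
      Real.Gamma ((n:ℝ)/2) * Real.Gamma (P-(n:ℝ)/2) / Real.Gamma ((n:ℝ)/2+(P-(n:ℝ)/2))) :
    ∫ r in Ioi (0:ℝ), r ^ (n-1) * ((1+r^2) ^ (-P)) =
      Real.Gamma ((n:ℝ)/2) * Real.Gamma (P-(n:ℝ)/2) / (2 * Real.Gamma P) := by
  have key := integral_comp_rpow_Ioi
    (fun y => (2:ℝ)⁻¹ * (y ^ ((n:ℝ)/2-1) * (1+y) ^ (-P))) (p := 2) two_ne_zero
  have hL : ∫ x in Ioi (0:ℝ), (|(2:ℝ)| * x ^ ((2:ℝ)-1)) •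
      ((2:ℝ)⁻¹ * ((x^(2:ℝ)) ^ ((n:ℝ)/2-1) * (1+x^(2:ℝ)) ^ (-P))) =
      ∫ r in Ioi (0:ℝ), r ^ (n-1) * ((1+r^2) ^ (-P)) := by
    refine setIntegral_congr_fun measurableSet_Ioi fun x hx => ?_
    have hx : (0:ℝ) < x := hx
    have h2 : x ^ (2:ℝ) = x^2 := by rw [← Real.rpow_natCast x 2]; norm_num
    rw [smul_eq_mul, h2]
    have h3 : (x^2) ^ ((n:ℝ)/2-1) = x ^ ((n:ℝ)-2) := by
      rw [← Real.rpow_natCast x 2, ← Real.rpow_mul hx.le]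
      ring_nf
    have h4 : x ^ (n-1) = x ^ ((n:ℝ)-1) := by
      rw [← Real.rpow_natCast x (n-1), Nat.cast_sub hn, Nat.cast_one]
    rw [h3, h4, show ((2:ℝ))-1 = 1 from by norm_num, Real.rpow_one,
      abs_of_pos (by norm_num : (0:ℝ) < 2)]
    have h5 : (2:ℝ) * x * (2⁻¹ * (x ^ ((n:ℝ)-2) * (1+x^2) ^ (-P)))
        = x * x ^ ((n:ℝ)-2) * (1+x^2) ^ (-P) := by ring
    have h6 : x * x^((n:ℝ)-2) = x^((n:ℝ)-1) := by
      have h7 := (Real.rpow_add hx 1 ((n:ℝ)-2)).symm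
      rw [Real.rpow_one] at h7
      rw [h7, show (1:ℝ)+((n:ℝ)-2) = (n:ℝ)-1 from by ring]
    rw [h5, h6]
  rw [← hL, key, integral_const_mul]
  have hPeq : (n:ℝ)/2 + (P - (n:ℝ)/2) = P := by ring
  have hInt : ∫ s in Ioi (0:ℝ), s ^ ((n:ℝ)/2-1) * (1+s) ^ (-P) =
      Real.Gamma ((n:ℝ)/2) * Real.Gamma (P-(n:ℝ)/2) / Real.Gamma P := by
    rw [hPeq] at hbeta; exact hbeta
  rw [hInt]
  field_simp

lemma eucl_int (n : ℕ) (hn : 1 ≤ n) {P : ℝ} (hP : (n:ℝ)/2 < P)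
    (hrad : ∫ r in Ioi (0:ℝ), r ^ (n-1) * ((1+r^2) ^ (-P)) =
      Real.Gamma ((n:ℝ)/2) * Real.Gamma (P-(n:ℝ)/2) / (2 * Real.Gamma P)) :
    ∫ x : EuclideanSpace ℝ (Fin n), (1+‖x‖^2) ^ (-P) =
      Real.pi ^ ((n:ℝ)/2) * Real.Gamma (P-(n:ℝ)/2) / Real.Gamma P := by
  haveI : Nonempty (Fin n) := ⟨⟨0, hn⟩⟩
  haveI : Nontrivial (EuclideanSpace ℝ (Fin n)) := inferInstance
  have hdim : Module.finrank ℝ (EuclideanSpace ℝ (Fin n)) = n := finrank_euclideanSpace_fin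
  rw [show (fun x : EuclideanSpace ℝ (Fin n) => (1+‖x‖^2) ^ (-P))
      = (fun x : EuclideanSpace ℝ (Fin n) => (fun r : ℝ => (1+r^2) ^ (-P)) ‖x‖) from rfl,
    integral_fun_norm_addHaar volume (fun r : ℝ => (1+r^2) ^ (-P)), hdim]
  have hball : ((volume (Metric.ball (0 : EuclideanSpace ℝ (Fin n)) 1)).toReal : ℝ)
      = Real.sqrt Real.pi ^ n / Real.Gamma ((n:ℝ)/2 + 1) := by
    rw [EuclideanSpace.volume_ball (Fin n) 0 1]
    simp only [Fintype.card_fin, ENNReal.ofReal_one, one_pow, one_mul]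
    rw [ENNReal.toReal_ofReal (by positivity)]
  have hn0 : (0:ℝ) < (n:ℝ) := by exact_mod_cast hn
  have hhalf : (0:ℝ) < (n:ℝ)/2 := by linarith
  have hG : (0:ℝ) < Real.Gamma ((n:ℝ)/2) := Real.Gamma_pos_of_pos hhalf
  have hGP : (0:ℝ) < Real.Gamma P := Real.Gamma_pos_of_pos (lt_trans hhalf hP)
  have hG1 : Real.Gamma ((n:ℝ)/2 + 1) = ((n:ℝ)/2) * Real.Gamma ((n:ℝ)/2) :=
    Real.Gamma_add_one hhalf.ne'
  have hsimp : ∫ y in Ioi (0:ℝ), y ^ (n-1) • ((1+y^2) ^ (-P))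
      = Real.Gamma ((n:ℝ)/2) * Real.Gamma (P-(n:ℝ)/2) / (2 * Real.Gamma P) := by
    simpa [smul_eq_mul] using hrad
  rw [hsimp, measureReal_def, hball, nsmul_eq_mul, smul_eq_mul, hG1]
  have hpi : Real.sqrt Real.pi ^ n = Real.pi ^ ((n:ℝ)/2) := by
    rw [Real.sqrt_eq_rpow, ← Real.rpow_natCast (Real.pi ^ ((1:ℝ)/2)) n,
      ← Real.rpow_mul Real.pi_pos.le]
    ring_nf
  rw [hpi]
  field_simp

end QGaussianAux

/-- For `n ≥ 1`, a symmetric positive-definite `B`, `μ ∈ ℝⁿ`, and `1 < q < 1 + 2/n`,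
the integral over `ℝⁿ` of `[1 + (q-1)·(x-μ)ᵀB(x-μ)]^(-1/(q-1))` converges and equals
`(q-1)^(-n/2)·(det B)^(-1/2)·π^(n/2)·Γ(1/(q-1) - n/2)/Γ(1/(q-1))`. -/
theorem integral_qGaussian_kernel (n : ℕ) (hn : 1 ≤ n) (B : Matrix (Fin n) (Fin n) ℝ)
    (hsymm : B.IsSymm) (hpos : B.PosDef) (μ : Fin n → ℝ) (q : ℝ)
    (hq1 : 1 < q) (hq2 : q < 1 + 2 / (n : ℝ)) :
    Integrable (fun x : Fin n → ℝ =>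
      (1 + (q - 1) * ((x - μ) ⬝ᵥ B.mulVec (x - μ))) ^ (-(1 / (q - 1)))) ∧
    (∫ x : Fin n → ℝ, (1 + (q - 1) * ((x - μ) ⬝ᵥ B.mulVec (x - μ))) ^ (-(1 / (q - 1)))) =
      (q - 1) ^ (-(n : ℝ) / 2) * B.det ^ (-(1 : ℝ) / 2) * Real.pi ^ ((n : ℝ) / 2) *
        Real.Gamma (1 / (q - 1) - (n : ℝ) / 2) / Real.Gamma (1 / (q - 1)) := by
  have hc : (0:ℝ) < q - 1 := by linarith
  have hn0 : (0:ℝ) < (n:ℝ) := by exact_mod_cast hn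
  set P : ℝ := 1 / (q - 1) with hPdef
  have hP : (n:ℝ)/2 < P := by
    have h2n : (0:ℝ) < 2 / (n:ℝ) := by positivity
    have hlt : q - 1 < 2 / (n:ℝ) := by linarith
    have := one_div_lt_one_div_of_lt hc hlt
    rwa [one_div_div] at this
  -- matrix setup
  have hB' : ((q-1) • B).PosDef := by
    refine ⟨?_, fun x hx => ?_⟩
    · rw [Matrix.IsHermitian, conjTranspose_smul, conjTranspose_eq_transpose_of_trivial,
        hsymm.eq]
      simp
    · exact (hpos.smul hc).2 hx
  set S : Matrix (Fin n) (Fin n) ℝ := CFC.sqrt ((q-1) • B) with hSdef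
  have hS : S.PosSemidef := Matrix.nonneg_iff_posSemidef.mp (CFC.sqrt_nonneg _)
  have hSmul : S * S = (q-1) • B := CFC.sqrt_mul_sqrt_self _ hB'.posSemidef.nonneg
  have hdetsq : S.det * S.det = ((q-1) • B).det := by rw [← Matrix.det_mul, hSmul]
  have hdetB : (0:ℝ) < B.det := hpos.det_pos
  have hdetB' : ((q-1) • B).det = (q-1)^n * B.det := by
    rw [Matrix.det_smul, Fintype.card_fin]
  have hdetB'pos : (0:ℝ) < ((q-1) • B).det := by
    rw [hdetB']; positivity
  have hSdet_ne : S.det ≠ 0 := by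
    intro h; rw [h, zero_mul] at hdetsq; exact hdetB'pos.ne hdetsq
  have hSabs : |S.det| = Real.sqrt (((q-1) • B).det) := by
    rw [← hdetsq, ← sq, Real.sqrt_sq_eq_abs]
  -- pointwise identity
  set g : (Fin n → ℝ) → ℝ := fun y => (1 + ∑ i, y i ^ 2) ^ (-P) with hgdef
  have hSsymm : Sᵀ = S := by
    rw [← conjTranspose_eq_transpose_of_trivial]; exact hS.1
  have hpt : ∀ v : Fin n → ℝ, (1 + (q - 1) * (v ⬝ᵥ B.mulVec v)) ^ (-(1/(q-1)))
      = g (S.mulVec v) := by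
    intro v
    have h1 : (q - 1) * (v ⬝ᵥ B.mulVec v) = v ⬝ᵥ ((q-1) • B).mulVec v := by
      rw [Matrix.smul_mulVec, dotProduct_smul, smul_eq_mul]
    have h2 : v ⬝ᵥ ((q-1) • B).mulVec v = (S.mulVec v) ⬝ᵥ (S.mulVec v) := by
      have hvm := Matrix.vecMul_transpose S v
      rw [hSsymm] at hvm
      rw [← hSmul, ← Matrix.mulVec_mulVec, Matrix.dotProduct_mulVec, hvm]
    have h3 : (S.mulVec v) ⬝ᵥ (S.mulVec v) = ∑ i, (S.mulVec v) i ^ 2 := by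
      simp [dotProduct, pow_two]
    rw [h1, h2, h3]
  -- linear change of variables
  set L : (Fin n → ℝ) →ₗ[ℝ] (Fin n → ℝ) := Matrix.toLin' S with hLdef
  have hLdet : LinearMap.det L = S.det := LinearMap.det_toLin' S
  have hLdet_ne : LinearMap.det L ≠ 0 := by rw [hLdet]; exact hSdet_ne
  have me : MeasurableEmbedding (⇑L) :=
    (L.equivOfDetNeZero hLdet_ne).toContinuousLinearEquiv.toHomeomorph.measurableEmbedding
  have hmap : Measure.map (⇑L) volume = ENNReal.ofReal |S.det⁻¹| • volume := by
    rw [Measure.map_linearMap_addHaar_eq_smul_addHaar volume hLdet_ne, hLdet]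
  have hcoef0 : ENNReal.ofReal |S.det⁻¹| ≠ 0 := by
    simp [ENNReal.ofReal_eq_zero, abs_pos, inv_ne_zero hSdet_ne, hSdet_ne,
      not_le, abs_pos.mpr (inv_ne_zero hSdet_ne)]
  -- transfer integrability/integral of g from EuclideanSpace
  have ha2 : (0:ℝ) < (n:ℝ)/2 := by linarith
  have hb2 : (0:ℝ) < P - (n:ℝ)/2 := by linarith
  have hEval := QGaussianAux.eucl_int n hn hP
    (QGaussianAux.radial n hn hP
      (QGaussianAux.beta_Ioi ha2 hb2 (QGaussianAux.beta_Ioo ha2 hb2)))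
  have hEint : Integrable (fun x : EuclideanSpace ℝ (Fin n) => (1+‖x‖^2) ^ (-P)) := by
    have h := integrable_rpow_neg_one_add_norm_sq (E := EuclideanSpace ℝ (Fin n))
      (μ := volume) (r := 2*P) (by rw [finrank_euclideanSpace_fin]; linarith)
    simpa [show -(2*P)/2 = -P from by ring] using h
  have he := EuclideanSpace.volume_preserving_symm_measurableEquiv_toLp (Fin n)
  have me' : MeasurableEmbedding ⇑(MeasurableEquiv.toLp 2 (Fin n → ℝ)).symm :=
    (MeasurableEquiv.toLp 2 (Fin n → ℝ)).symm.measurableEmbedding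
  have hge : (g ∘ ⇑(MeasurableEquiv.toLp 2 (Fin n → ℝ)).symm)
      = fun x : EuclideanSpace ℝ (Fin n) => (1+‖x‖^2) ^ (-P) := by
    funext x
    have hnorm : ‖x‖^2 = ∑ i, x i ^ 2 := by
      rw [EuclideanSpace.norm_eq, Real.sq_sqrt (by positivity)]
      simp [Real.norm_eq_abs, sq_abs]
    simp only [Function.comp_apply, hgdef, hnorm]
    rfl
  have hgint : Integrable g := by
    refine (he.integrable_comp_emb me').mp ?_
    rw [hge]; exact hEint
  have hgval : ∫ y, g y = Real.pi ^ ((n:ℝ)/2) * Real.Gamma (P-(n:ℝ)/2) / Real.Gamma P := by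
    rw [← he.integral_comp me' g, ← hEval]
    exact congrArg (fun f => ∫ x : EuclideanSpace ℝ (Fin n), f x) hge
  -- integrability of the composed function
  have hgLint : Integrable (g ∘ ⇑L) := by
    rw [← me.integrable_map_iff, hmap]
    exact (integrable_smul_measure hcoef0 ENNReal.ofReal_ne_top).mpr hgint
  have hgLval : ∫ x, g (L x) = |S.det⁻¹| * ∫ y, g y := by
    have h1 := me.integral_map (μ := volume) g
    rw [hmap, integral_smul_measure, ENNReal.toReal_ofReal (abs_nonneg _)] at h1
    rw [← h1]; rfl
  have hLapp : ∀ v, L v = S.mulVec v := fun v => Matrix.toLin'_apply S v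
  have hfun : (fun x : Fin n → ℝ =>
      (1 + (q - 1) * ((x - μ) ⬝ᵥ B.mulVec (x - μ))) ^ (-(1 / (q - 1))))
      = fun x => (g ∘ ⇑L) (x - μ) := by
    funext x
    rw [hpt (x - μ)]
    simp only [Function.comp_apply, hLapp]
  constructor
  · rw [hfun]
    exact hgLint.comp_sub_right μ
  · rw [hfun]
    have ht : ∫ x : Fin n → ℝ, (g ∘ ⇑L) (x - μ) = ∫ x, (g ∘ ⇑L) x :=
      integral_sub_right_eq_self (g ∘ ⇑L) μ
    rw [ht]
    have : ∫ x, (g ∘ ⇑L) x = |S.det⁻¹| * ∫ y, g y := hgLval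
    rw [this, hgval, abs_inv, hSabs, hdetB']
    have hkey : (Real.sqrt ((q-1)^n * B.det))⁻¹
        = (q - 1) ^ (-(n : ℝ) / 2) * B.det ^ (-(1 : ℝ) / 2) := by
      rw [Real.sqrt_eq_rpow, Real.mul_rpow (by positivity) hdetB.le, mul_inv,
        ← Real.rpow_neg (by positivity : (0:ℝ) ≤ (q-1)^n),
        ← Real.rpow_neg hdetB.le]
      congr 1
      · rw [← Real.rpow_natCast (q-1) n, ← Real.rpow_mul hc.le]
        congr 1; ring
      · congr 1; norm_num
    rw [hkey]
    ring
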